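/- Let Q = Σ_{i∈I} E_{i,σ(i)} be a strictly upper triangular n×n subpermutation matrix over F, and let A ∈ Q U_n. For a unit upper triangular matrix U = I + [u_{ij}], the conjugate U A U^{-1} lies in Q U_n if and only if every nonzero entry u_{ij} (i < j) has (i,j) in the set S_Q = {(i,j) ∈ I×I : i < j, σ(i) < σ(j)} ∪ {(i,j) : i < j, j ∉ I}. -/

import Mathlib

section Aux
variable {F : Type*} [Field F] {n : ℕ}

lemma ut_mul_aux {A B : Matrix (Fin n) (Fin n) F}
    (hA : ∀ i j : Fin n, j < i → A i j = 0) (hB : ∀ i j : Fin n, j < i → B i j = 0)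
    (i j : Fin n) (hji : j < i) : (A * B) i j = 0 := by
  rw [Matrix.mul_apply]
  refine Finset.sum_eq_zero fun k _ => ?_
  rcases lt_or_ge k i with h | h
  · rw [hA i k h, zero_mul]
  · rw [hB k j (lt_of_lt_of_le hji h), mul_zero]

lemma ut_mul_diag_aux {A B : Matrix (Fin n) (Fin n) F}
    (hA : ∀ i j : Fin n, j < i → A i j = 0) (hB : ∀ i j : Fin n, j < i → B i j = 0)
    (i : Fin n) : (A * B) i i = A i i * B i i := by
  rw [Matrix.mul_apply]
  refine Finset.sum_eq_single i (fun k _ hk => ?_) (by simp)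
  rcases lt_or_gt_of_ne hk with h | h
  · rw [hA i k h, zero_mul]
  · rw [hB k i h, mul_zero]

end Aux

/-- for A ∈ Q·U_n, the conjugate U A U⁻¹ stays in Q·U_n iff all
nonzero strictly upper entries of U lie in the set S_Q. -/
theorem conj_mem_coset_iff_SQ {F : Type*} [Field F] {n : ℕ}
    (I : Finset (Fin n)) (σ : Fin n → Fin n)
    (hσi : ∀ i ∈ I, i < σ i) (hσ : Set.InjOn σ ↑I)
    (Q : Matrix (Fin n) (Fin n) F)
    (hQ : ∀ i j : Fin n, Q i j = if i ∈ I ∧ j = σ i then 1 else 0)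
    (A V : Matrix (Fin n) (Fin n) F)
    (hVut : ∀ i j : Fin n, j < i → V i j = 0) (hVdiag : ∀ i : Fin n, V i i = 1)
    (hA : A = Q * V)
    (U : Matrix (Fin n) (Fin n) F)
    (hUut : ∀ i j : Fin n, j < i → U i j = 0) (hUdiag : ∀ i : Fin n, U i i = 1) :
    (∃ W : Matrix (Fin n) (Fin n) F,
        (∀ i j : Fin n, j < i → W i j = 0) ∧ (∀ i : Fin n, W i i = 1) ∧
        U * A * U⁻¹ = Q * W) ↔
    (∀ i j : Fin n, i < j → U i j ≠ 0 →
      ((i ∈ I ∧ j ∈ I ∧ σ i < σ j) ∨ j ∉ I)) := by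
  classical
  -- U is invertible with unit upper triangular inverse
  have hUbt : U.BlockTriangular id := fun i j h => hUut i j h
  have hdet : U.det = 1 := by
    rw [Matrix.det_of_upperTriangular hUbt]; simp [hUdiag]
  have hUunit : IsUnit U.det := by rw [hdet]; exact isUnit_one
  haveI : Invertible U := U.invertibleOfIsUnitDet hUunit
  have hUinv_bt : (U⁻¹).BlockTriangular id :=
    Matrix.blockTriangular_inv_of_blockTriangular hUbt
  have hUinvut : ∀ i j : Fin n, j < i → U⁻¹ i j = 0 := fun i j h => hUinv_bt h
  have hUUinv : U * U⁻¹ = 1 := Matrix.mul_nonsing_inv U hUunit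
  have hUinvdiag : ∀ i : Fin n, U⁻¹ i i = 1 := by
    intro i
    have h1 : (U * U⁻¹) i i = U i i * U⁻¹ i i := ut_mul_diag_aux hUut hUinvut i
    rw [hUUinv, hUdiag, one_mul] at h1
    rw [← h1, Matrix.one_apply_eq]
  set T := V * U⁻¹ with hT
  have hTut : ∀ i j : Fin n, j < i → T i j = 0 := fun i j h => ut_mul_aux hVut hUinvut i j h
  have hTdiag : ∀ i : Fin n, T i i = 1 := by
    intro i
    rw [hT, ut_mul_diag_aux hVut hUinvut, hVdiag, hUinvdiag, one_mul]
  set M := U * A * U⁻¹ with hMdef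
  -- key formula for the entries of M
  have key : ∀ i k : Fin n, M i k = ∑ j ∈ I, U i j * T (σ j) k := by
    intro i k
    have hM2 : M = (U * Q) * T := by rw [hMdef, hA, hT]; simp only [Matrix.mul_assoc]
    have hUQ : ∀ m, (U * Q) i m = ∑ j ∈ I, if m = σ j then U i j else 0 := by
      intro m
      rw [Matrix.mul_apply]
      rw [← Finset.sum_subset (Finset.subset_univ I)
        (fun j _ hj => by rw [hQ]; simp [hj])]
      refine Finset.sum_congr rfl fun j hj => ?_
      rw [hQ]; simp [hj]
    rw [hM2, Matrix.mul_apply]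
    simp only [hUQ, Finset.sum_mul]
    rw [Finset.sum_comm]
    refine Finset.sum_congr rfl fun j _ => ?_
    simp only [ite_mul, zero_mul]
    rw [Finset.sum_ite_eq' Finset.univ (σ j) (fun m => U i j * T m k)]
    simp
  -- (Q * W) entries
  have hQW : ∀ (W : Matrix (Fin n) (Fin n) F) (i k : Fin n),
      (Q * W) i k = if i ∈ I then W (σ i) k else 0 := by
    intro W i k
    rw [Matrix.mul_apply]
    by_cases hi : i ∈ I
    · simp [hQ, hi, ite_mul]
    · simp [hQ, hi]
  -- characterization of membership in Q·U_n
  have mem_iff : (∃ W : Matrix (Fin n) (Fin n) F,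
        (∀ i j : Fin n, j < i → W i j = 0) ∧ (∀ i : Fin n, W i i = 1) ∧ M = Q * W) ↔
      ((∀ i ∉ I, ∀ k, M i k = 0) ∧
        ∀ i ∈ I, M i (σ i) = 1 ∧ ∀ k, k < σ i → M i k = 0) := by
    constructor
    · rintro ⟨W, hWut, hWdiag, hMW⟩
      constructor
      · intro i hi k
        rw [hMW, hQW]; simp [hi]
      · intro i hi
        constructor
        · rw [hMW, hQW]; simp [hi, hWdiag]
        · intro k hk
          rw [hMW, hQW]; simp [hi, hWut (σ i) k hk]
    · rintro ⟨h0, hI⟩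
      refine ⟨fun k l => if h : ∃ i, i ∈ I ∧ σ i = k then M h.choose l
        else (1 : Matrix (Fin n) (Fin n) F) k l, ?_, ?_, ?_⟩
      · intro k l hlk
        dsimp only
        split
        · next h =>
          obtain ⟨hiI, hk⟩ := h.choose_spec
          exact (hI _ hiI).2 l (by rw [hk]; exact hlk)
        · exact Matrix.one_apply_ne (ne_of_gt hlk)
      · intro k
        dsimp only
        split
        · next h =>
          obtain ⟨hiI, hk⟩ := h.choose_spec
          have := (hI _ hiI).1
          rwa [hk] at this
        · exact Matrix.one_apply_eq k
      · ext i k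
        erw [hQW]
        by_cases hi : i ∈ I
        · simp only [hi, if_true]
          have hex : ∃ i', i' ∈ I ∧ σ i' = σ i := ⟨i, hi, rfl⟩
          rw [dif_pos hex]
          obtain ⟨hiI', hk'⟩ := hex.choose_spec
          have : hex.choose = i := hσ (Finset.mem_coe.mpr hiI') (Finset.mem_coe.mpr hi) hk'
          rw [this]
        · simp only [hi, if_false]
          exact h0 i hi k
  rw [mem_iff]
  -- the minimal-σ argument
  have min_lemma : ∀ i j0 : Fin n, j0 ∈ I → U i j0 ≠ 0 →
      (∀ j ∈ I, U i j ≠ 0 → σ j0 ≤ σ j) → M i (σ j0) = U i j0 := by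
    intro i j0 hj0 hU0 hmin
    rw [key]
    rw [Finset.sum_eq_single j0]
    · rw [hTdiag, mul_one]
    · intro j hj hne
      by_cases hU : U i j = 0
      · rw [hU, zero_mul]
      · have hle : σ j0 ≤ σ j := hmin j hj hU
        have hne' : σ j0 ≠ σ j := fun h =>
          hne (hσ (Finset.mem_coe.mpr hj) (Finset.mem_coe.mpr hj0) h.symm)
        rw [hTut (σ j) (σ j0) (lt_of_le_of_ne hle hne'), mul_zero]
    · intro h; exact absurd hj0 h
  constructor
  · rintro ⟨hrow0, hrowI⟩ i j hij hU
    by_contra hcon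
    push_neg at hcon
    obtain ⟨h1, hjI⟩ := hcon
    -- minimal σ over nonzero entries of row i indexed by I
    set S := I.filter (fun j' => U i j' ≠ 0) with hS
    have hjS : j ∈ S := by rw [hS, Finset.mem_filter]; exact ⟨hjI, hU⟩
    obtain ⟨j0, hj0S, hmin⟩ := Finset.exists_min_image S σ ⟨j, hjS⟩
    obtain ⟨hj0I, hUj0⟩ := Finset.mem_filter.mp hj0S
    have hM0 : M i (σ j0) = U i j0 :=
      min_lemma i j0 hj0I hUj0 (fun j' hj' hU' => hmin j' (by rw [hS, Finset.mem_filter]; exact ⟨hj', hU'⟩))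
    by_cases hi : i ∈ I
    · have hσji : σ j ≤ σ i := h1 hi hjI
      have hne : σ j ≠ σ i := fun h =>
        (ne_of_lt hij) (hσ (Finset.mem_coe.mpr hjI) (Finset.mem_coe.mpr hi) h).symm
      have hjlt : σ j < σ i := lt_of_le_of_ne hσji hne
      have hj0lt : σ j0 < σ i := lt_of_le_of_lt (hmin j hjS) hjlt
      have := (hrowI i hi).2 (σ j0) hj0lt
      rw [hM0] at this
      exact hUj0 this
    · have := hrow0 i hi (σ j0)
      rw [hM0] at this
      exact hUj0 this
  · intro hsupp
    constructor
    · intro i hi k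
      rw [key]
      refine Finset.sum_eq_zero fun j hj => ?_
      have hU : U i j = 0 := by
        by_contra hU
        have hij : i < j := by
          rcases lt_trichotomy i j with h | h | h
          · exact h
          · exact absurd hj (h ▸ hi)
          · exact absurd (hUut i j h) hU
        rcases hsupp i j hij hU with ⟨hiI, _, _⟩ | hjI
        · exact hi hiI
        · exact hjI hj
      rw [hU, zero_mul]
    · intro i hi
      have hrow : ∀ k, k ≤ σ i → M i k = T (σ i) k := by
        intro k hk
        rw [key, Finset.sum_eq_single i]
        · rw [hUdiag, one_mul]
        · intro j hj hne
          by_cases hU : U i j = 0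
          · rw [hU, zero_mul]
          · have hij : i < j := by
              rcases lt_trichotomy i j with h | h | h
              · exact h
              · exact absurd h.symm hne
              · exact absurd (hUut i j h) hU
            rcases hsupp i j hij hU with ⟨_, _, hlt⟩ | hjI
            · rw [hTut (σ j) k (lt_of_le_of_lt hk hlt), mul_zero]
            · exact absurd hj hjI
        · intro h; exact absurd hi h
      exact ⟨by rw [hrow (σ i) le_rfl, hTdiag],
        fun k hk => by rw [hrow k hk.le, hTut (σ i) k hk]⟩
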